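/- The RepSet architecture is invariant to the permutation of the elements of the input set: let v : Fin n → (Fin d → ℝ) be an input set of vectors, let H^(1), …, H^(m) be hidden sets where the k-th hidden set consists of vectors u^(k) : Fin (n_k) → (Fin d → ℝ), let f(a, b) = max(⟨a, b⟩, 0) (ReLU of the Euclidean inner product), and define x ∈ ℝ^m by x_k = M(fun i j => f (v i) (u^(k) j)). Then for every matrix W : Fin C → Fin m → ℝ, every bias b : Fin C → ℝ, and every permutation π of Fin n, the output softmax(W x' + b) computed from the permuted input v ∘ π (giving x'_k = M(fun i j => f (v (π i)) (u^(k) j))) equals the output softmax(W x + b) computed from v; here softmax(r)_j = exp(r_j) / ∑_l exp(r_l). -/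
import Mathlib


/-- The exact matching polytope `P(m,n)`. -/
def matchingPolytope (m n : ℕ) : Set (Fin m → Fin n → ℝ) :=
  {z | (∀ i j, 0 ≤ z i j) ∧ (∀ j, ∑ i, z i j ≤ 1) ∧ (∀ i, ∑ j, z i j ≤ 1)}

/-- The exact matching value `M(c)`. -/
noncomputable def matchingValue {m n : ℕ} (c : Fin m → Fin n → ℝ) : ℝ :=
  sSup ((fun z => ∑ i, ∑ j, z i j * c i j) '' matchingPolytope m n)

lemma matchingValue_perm {m n : ℕ} (c : Fin m → Fin n → ℝ) (π : Equiv.Perm (Fin m)) :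
    matchingValue (fun i j => c (π i) j) = matchingValue c := by
  unfold matchingValue
  congr 1
  ext y
  constructor
  · rintro ⟨z, ⟨h0, h1, h2⟩, rfl⟩
    refine ⟨fun i j => z (π.symm i) j, ⟨fun i j => h0 _ _, fun j => ?_, fun i => h2 _⟩, ?_⟩
    · simp only
      rw [Equiv.sum_comp π.symm (fun i => z i j)]
      exact h1 j
    · simp only
      rw [← Equiv.sum_comp π (fun i => ∑ j, z (π.symm i) j * c i j)]
      simp
  · rintro ⟨z, ⟨h0, h1, h2⟩, rfl⟩
    refine ⟨fun i j => z (π i) j, ⟨fun i j => h0 _ _, fun j => ?_, fun i => h2 _⟩, ?_⟩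
    · rw [Equiv.sum_comp π (fun i => z i j)]
      exact h1 j
    · simp only
      rw [← Equiv.sum_comp π (fun i => ∑ j, z i j * c i j)]

/-- The RepSet architecture is invariant to the permutation of the elements of the
input set: the softmax output computed from the permuted input `v ∘ π` equals the
softmax output computed from `v`. -/
theorem repset_permutation_invariant {n d m C : ℕ}
    (hn : 0 < n) (hd : 0 < d) (hm : 0 < m) (hC : 0 < C)
    (v : Fin n → Fin d → ℝ) (nk : Fin m → ℕ)
    (u : (k : Fin m) → Fin (nk k) → Fin d → ℝ)
    (W : Fin C → Fin m → ℝ) (b : Fin C → ℝ) (π : Equiv.Perm (Fin n)) :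
    let f : (Fin d → ℝ) → (Fin d → ℝ) → ℝ := fun a b' => max (∑ t, a t * b' t) 0
    let x : Fin m → ℝ := fun k => matchingValue (fun i j => f (v i) (u k j))
    let x' : Fin m → ℝ := fun k => matchingValue (fun i j => f (v (π i)) (u k j))
    let softmax : (Fin C → ℝ) → Fin C → ℝ :=
      fun r j => Real.exp (r j) / ∑ l, Real.exp (r l)
    softmax (fun j => (∑ l, W j l * x' l) + b j) =
      softmax (fun j => (∑ l, W j l * x l) + b j) := by
  intro f x x' softmax
  have hx : x' = x := by
    funext k
    exact matchingValue_perm (fun i j => f (v i) (u k j)) π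
  rw [hx]
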